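/- Let (E,w,d) be an ultra triple, r ≥ 0, and A ⊆ C ⊆ E finite with |A| = k. Let (c_1,…,c_k) be an ordering of a k-subset of C of maximum r-removed perimeter, and let (v_1,…,v_k) = proj({c_1,…,c_k} → A). If per_r({v_1,…,v_k}) = per_r({c_1,…,c_k}), then for each j < k, per_r({v_1,…,v_j}) = per_r({c_1,…,c_j}), where {c_1,…,c_j} has maximum r-removed perimeter among j-subsets of C (e.g., coming from a greedy r-removed permutation). -/
import Mathlib


open Finset

noncomputable def distR {E : Type*} [DecidableEq E] (d : E → E → ℝ) (r : ℕ)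
    (C : Finset E) (v : E) : ℝ :=
  if C.card ≤ r then 0
  else sSup {s : ℝ | ∃ A ⊆ C, A.card = C.card - r ∧ s = ∑ x ∈ A, d v x}

section Aux

variable {E : Type*} [DecidableEq E]

noncomputable def Psup (d : E → E → ℝ) (v : E) (q : ℕ) (U : Finset E) : ℝ :=
  sSup {s : ℝ | ∃ B ⊆ U, B.card = q ∧ s = ∑ x ∈ B, d v x}

lemma Psup_eq_sup' (d : E → E → ℝ) (v : E) {q : ℕ} {U : Finset E} (h : q ≤ U.card) :
    Psup d v q U = (U.powersetCard q).sup' (Finset.powersetCard_nonempty.2 h)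
      (fun B => ∑ x ∈ B, d v x) := by
  rw [Finset.sup'_eq_csSup_image, Psup]
  congr 1
  ext s
  simp only [Set.mem_setOf_eq, Set.mem_image, Finset.mem_coe, Finset.mem_powersetCard]
  constructor
  · rintro ⟨B, h1, h2, rfl⟩; exact ⟨B, ⟨h1, h2⟩, rfl⟩
  · rintro ⟨B, ⟨h1, h2⟩, rfl⟩; exact ⟨B, h1, h2, rfl⟩

lemma le_Psup (d : E → E → ℝ) (v : E) {q : ℕ} {U B : Finset E} (hB : B ⊆ U)
    (hc : B.card = q) : ∑ x ∈ B, d v x ≤ Psup d v q U := by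
  rw [Psup_eq_sup' d v (by rw [← hc]; exact Finset.card_le_card hB)]
  exact Finset.le_sup' (fun B => ∑ x ∈ B, d v x) (Finset.mem_powersetCard.2 ⟨hB, hc⟩)

lemma Psup_le (d : E → E → ℝ) (v : E) {q : ℕ} {U : Finset E} (h : q ≤ U.card) {X : ℝ}
    (hX : ∀ B ⊆ U, B.card = q → ∑ x ∈ B, d v x ≤ X) : Psup d v q U ≤ X := by
  rw [Psup_eq_sup' d v h]
  exact Finset.sup'_le _ _ fun B hB =>
    hX B (Finset.mem_powersetCard.1 hB).1 (Finset.mem_powersetCard.1 hB).2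

lemma Psup_exists (d : E → E → ℝ) (v : E) {q : ℕ} {U : Finset E} (h : q ≤ U.card) :
    ∃ B ⊆ U, B.card = q ∧ Psup d v q U = ∑ x ∈ B, d v x := by
  rw [Psup_eq_sup' d v h]
  obtain ⟨B, hB, hEq⟩ := Finset.exists_mem_eq_sup' (Finset.powersetCard_nonempty.2 h)
    (fun B => ∑ x ∈ B, d v x)
  exact ⟨B, (Finset.mem_powersetCard.1 hB).1, (Finset.mem_powersetCard.1 hB).2, hEq⟩

lemma Psup_zero (d : E → E → ℝ) (v : E) (U : Finset E) : Psup d v 0 U = 0 := by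
  rw [Psup_eq_sup' d v (Nat.zero_le _)]
  simp [Finset.powersetCard_zero]

lemma distR_of_card_le {d : E → E → ℝ} {r : ℕ} {U : Finset E} (h : U.card ≤ r) (v : E) :
    distR d r U v = 0 := if_pos h

lemma distR_eq_Psup {d : E → E → ℝ} {r : ℕ} {U : Finset E} (h : r ≤ U.card) (v : E) :
    distR d r U v = Psup d v (U.card - r) U := by
  rcases eq_or_lt_of_le h with h' | h'
  · rw [distR_of_card_le h'.symm.le, ← h', Nat.sub_self, Psup_zero]
  · unfold distR
    rw [if_neg (not_le.2 h')]
    rfl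

end Aux


section Swap

variable {E : Type*} [DecidableEq E]

lemma Psup_swap_le (d : E → E → ℝ)
    (hsymm : ∀ a b : E, a ≠ b → d a b = d b a)
    (hultra : ∀ a b c : E, a ≠ b → a ≠ c → b ≠ c → d a b ≤ max (d a c) (d b c))
    {a b : E} {L : Finset E} (hab : a ≠ b) (ha : a ∉ L) (hb : b ∉ L)
    {q : ℕ} (hq : q ≤ L.card) :
    Psup d b q L + Psup d a (q + 1) (insert b L) ≤
      Psup d a q L + Psup d b (q + 1) (insert a L) := by
  obtain ⟨S, hSL, hScard, hSval⟩ := Psup_exists d b (U := L) hq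
  have hq1 : q + 1 ≤ (insert b L).card := by
    rw [Finset.card_insert_of_notMem hb]; omega
  obtain ⟨T, hTL, hTcard, hTval⟩ := Psup_exists d a hq1
  rw [hSval, hTval]
  have haS : a ∉ S := fun h => ha (hSL h)
  have hiaS : (insert a S).card = q + 1 := by
    rw [Finset.card_insert_of_notMem haS, hScard]
  have hiaSsub : insert a S ⊆ insert a L := Finset.insert_subset_insert a hSL
  have h2 : ∑ x ∈ insert a S, d b x ≤ Psup d b (q + 1) (insert a L) :=
    le_Psup d b hiaSsub hiaS
  have e2 : ∑ x ∈ insert a S, d b x = d b a + ∑ x ∈ S, d b x :=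
    Finset.sum_insert haS
  by_cases hbT : b ∈ T
  · have hT' : T.erase b ⊆ L := Finset.subset_insert_iff.1 hTL
    have hcard' : (T.erase b).card = q := by
      rw [Finset.card_erase_of_mem hbT, hTcard]
      omega
    have h1 : ∑ x ∈ T.erase b, d a x ≤ Psup d a q L := le_Psup d a hT' hcard'
    have e1 : d a b + ∑ x ∈ T.erase b, d a x = ∑ x ∈ T, d a x :=
      Finset.add_sum_erase _ _ hbT
    have hs := hsymm a b hab
    linarith
  · have hTL' : T ⊆ L := (Finset.subset_insert_iff_of_notMem hbT).1 hTL
    have hns : ¬ T ⊆ S := fun hsub => by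
      have := Finset.card_le_card hsub; omega
    obtain ⟨x, hxT, hxS⟩ := Finset.not_subset.1 hns
    have hxL : x ∈ L := hTL' hxT
    have hxa : x ≠ a := fun h => ha (h ▸ hxL)
    have hxb : x ≠ b := fun h => hb (h ▸ hxL)
    have e1 : d a x + ∑ y ∈ T.erase x, d a y = ∑ y ∈ T, d a y :=
      Finset.add_sum_erase _ _ hxT
    have hT'sub : T.erase x ⊆ L := (Finset.erase_subset _ _).trans hTL'
    have hT'card : (T.erase x).card = q := by
      rw [Finset.card_erase_of_mem hxT, hTcard]
      omega
    have h1 : ∑ y ∈ T.erase x, d a y ≤ Psup d a q L := le_Psup d a hT'sub hT'card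
    have key : d a x ≤ max (d a b) (d x b) := hultra a x b hxa.symm hab hxb
    rcases le_max_iff.1 key with hcase | hcase
    · -- d a x ≤ d a b; use insert a S
      have hs := hsymm a b hab
      linarith
    · -- d a x ≤ d x b = d b x; use insert x S
      rw [hsymm x b hxb] at hcase
      have hixS : (insert x S).card = q + 1 := by
        rw [Finset.card_insert_of_notMem hxS, hScard]
      have hixSsub : insert x S ⊆ insert a L :=
        Finset.insert_subset (Finset.mem_insert_of_mem hxL)
          (hSL.trans (Finset.subset_insert a L))
      have h2' : ∑ y ∈ insert x S, d b y ≤ Psup d b (q + 1) (insert a L) :=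
        le_Psup d b hixSsub hixS
      have e2' : ∑ y ∈ insert x S, d b y = d b x + ∑ y ∈ S, d b y :=
        Finset.sum_insert hxS
      linarith

lemma distR_swap (d : E → E → ℝ)
    (hsymm : ∀ a b : E, a ≠ b → d a b = d b a)
    (hultra : ∀ a b c : E, a ≠ b → a ≠ c → b ≠ c → d a b ≤ max (d a c) (d b c))
    {a b : E} {L : Finset E} (hab : a ≠ b) (ha : a ∉ L) (hb : b ∉ L) (r : ℕ) :
    distR d r L b + distR d r (insert b L) a =
      distR d r L a + distR d r (insert a L) b := by
  have hcb : (insert b L).card = L.card + 1 := Finset.card_insert_of_notMem hb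
  have hca : (insert a L).card = L.card + 1 := Finset.card_insert_of_notMem ha
  rcases le_or_gt r L.card with h | h
  · have e1 : distR d r L b = Psup d b (L.card - r) L := distR_eq_Psup h b
    have e2 : distR d r L a = Psup d a (L.card - r) L := distR_eq_Psup h a
    have e3 : distR d r (insert b L) a = Psup d a (L.card - r + 1) (insert b L) := by
      rw [distR_eq_Psup (by omega : r ≤ (insert b L).card) a, hcb]
      congr 1
      omega
    have e4 : distR d r (insert a L) b = Psup d b (L.card - r + 1) (insert a L) := by
      rw [distR_eq_Psup (by omega : r ≤ (insert a L).card) b, hca]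
      congr 1
      omega
    rw [e1, e2, e3, e4]
    have h1 := Psup_swap_le d hsymm hultra hab ha hb (Nat.sub_le L.card r)
    have h2 := Psup_swap_le d hsymm hultra hab.symm hb ha (Nat.sub_le L.card r)
    linarith
  · rw [distR_of_card_le (show L.card ≤ r by omega) a,
      distR_of_card_le (show L.card ≤ r by omega) b,
      distR_of_card_le (show (insert b L).card ≤ r by omega) a,
      distR_of_card_le (show (insert a L).card ≤ r by omega) b]

end Swap

noncomputable def perList {E : Type*} [DecidableEq E] (w : E → ℝ) (d : E → E → ℝ)
    (r : ℕ) : List E → ℝ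
  | [] => 0
  | a :: l => perList w d r l + w a + distR d r l.toFinset a

noncomputable def perR {E : Type*} [DecidableEq E] (w : E → ℝ) (d : E → E → ℝ)
    (r : ℕ) (A : Finset E) : ℝ := perList w d r A.toList

section Perm

variable {E : Type*} [DecidableEq E]

lemma perList_perm (w : E → ℝ) (d : E → E → ℝ)
    (hsymm : ∀ a b : E, a ≠ b → d a b = d b a)
    (hultra : ∀ a b c : E, a ≠ b → a ≠ c → b ≠ c → d a b ≤ max (d a c) (d b c))
    (r : ℕ) {l₁ l₂ : List E} (h : l₁.Perm l₂) :
    l₁.Nodup → perList w d r l₁ = perList w d r l₂ := by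
  induction h with
  | nil => intro _; rfl
  | cons x h ih =>
    intro hn
    simp only [perList]
    rw [ih (List.nodup_cons.1 hn).2, List.toFinset_eq_of_perm _ _ h]
  | swap x y l =>
    intro hn
    simp only [List.nodup_cons, List.mem_cons, not_or] at hn
    obtain ⟨⟨hyx, hyl⟩, hxl, _⟩ := hn
    simp only [perList, List.toFinset_cons]
    have := distR_swap d hsymm hultra hyx (show y ∉ l.toFinset by simpa using hyl) (show x ∉ l.toFinset by simpa using hxl) r
    linarith
  | trans h1 h2 ih1 ih2 =>
    intro hn
    rw [ih1 hn, ih2 (h1.nodup_iff.1 hn)]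

lemma perR_insert (w : E → ℝ) (d : E → E → ℝ)
    (hsymm : ∀ a b : E, a ≠ b → d a b = d b a)
    (hultra : ∀ a b c : E, a ≠ b → a ≠ c → b ≠ c → d a b ≤ max (d a c) (d b c))
    (r : ℕ) {x : E} {S : Finset E} (hx : x ∉ S) :
    perR w d r (insert x S) = perR w d r S + w x + distR d r S x := by
  rw [perR, perList_perm w d hsymm hultra r (Finset.toList_insert hx)
    (Finset.nodup_toList _)]
  simp only [perList, Finset.toList_toFinset]
  rfl

end Perm


/-- `b` is a projection of `c` onto the finite set `A`. -/
def IsProj {E : Type*} [DecidableEq E] (d : E → E → ℝ) (A : Finset E) (c b : E) : Prop :=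
  (c ∈ A ∧ b = c) ∨ (c ∉ A ∧ b ∈ A ∧ ∀ x ∈ A, d c b ≤ d c x)

/-- `v` is a sequential projection of the ordered set `c` (of length `k`) onto `A`. -/
def IsSeqProj {E : Type*} [DecidableEq E] (d : E → E → ℝ) (A : Finset E)
    (k : ℕ) (c v : ℕ → E) : Prop :=
  ∀ i < k, IsProj d (A \ (Finset.range i).image v) (c i) (v i)

/-- `c` is a greedy `r`-removed `m`-permutation of `C`. -/
def IsGreedy {E : Type*} [DecidableEq E] (w : E → ℝ) (d : E → E → ℝ) (r : ℕ)
    (C : Finset E) (m : ℕ) (c : ℕ → E) : Prop :=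
  (∀ i < m, c i ∈ C) ∧ (∀ i < m, ∀ j < m, c i = c j → i = j) ∧
  ∀ i < m, ∀ x ∈ C, x ∉ (Finset.range i).image c →
    perR w d r (insert x ((Finset.range i).image c)) ≤
      perR w d r (insert (c i) ((Finset.range i).image c))

noncomputable def distF {E : Type*} [DecidableEq E] (d : E → E → ℝ)
    (f : ℕ → ℝ → ℝ) (C : Finset E) (x : E) : ℝ :=
  let l := (C.toList.map (fun c => d x c)).insertionSort (· ≤ ·)
  ∑ i ∈ Finset.range l.length, f (i + 1) (l.getD i 0)

theorem stmt18 {E : Type*} [DecidableEq E] (w : E → ℝ) (d : E → E → ℝ)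
    (hsymm : ∀ a b : E, a ≠ b → d a b = d b a)
    (hultra : ∀ a b c : E, a ≠ b → a ≠ c → b ≠ c → d a b ≤ max (d a c) (d b c))
    (r m k : ℕ) (C : Finset E) (c : ℕ → E) (hc : IsGreedy w d r C m c) (hk : k ≤ m)
    (A : Finset E) (hAC : A ⊆ C) (hAcard : A.card = k)
    (v : ℕ → E) (hv : IsSeqProj d A k c v)
    (heq : perR w d r ((Finset.range k).image v) = perR w d r ((Finset.range k).image c)) :
    ∀ j < k,
      perR w d r ((Finset.range j).image v) = perR w d r ((Finset.range j).image c) := by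
  obtain ⟨hcmem, hcinj, hgreedy⟩ := hc
  -- basic facts about v
  have hvA : ∀ i < k, v i ∈ A ∧ v i ∉ (Finset.range i).image v := by
    intro i hi
    have : v i ∈ A \ (Finset.range i).image v := by
      rcases hv i hi with ⟨h1, h2⟩ | ⟨_, h2, _⟩
      · exact h2 ▸ h1
      · exact h2
    exact Finset.mem_sdiff.1 this
  have hvinj : ∀ s < k, ∀ t < k, v s = v t → s = t := by
    intro s hs t ht hst
    rcases lt_trichotomy s t with h | h | h
    · exact absurd (Finset.mem_image_of_mem v (Finset.mem_range.2 h))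
        (by rw [hst]; exact (hvA t ht).2)
    · exact h
    · exact absurd (Finset.mem_image_of_mem v (Finset.mem_range.2 h))
        (by rw [← hst]; exact (hvA s hs).2)
  have hcnotin : ∀ i < m, c i ∉ (Finset.range i).image c := by
    intro i hi h
    obtain ⟨s, hs, hcs⟩ := Finset.mem_image.1 h
    have hs' := Finset.mem_range.1 hs
    exact absurd (hcinj s (by omega) i hi hcs) (by omega)
  have hvnotinC : ∀ i < k, v i ∉ (Finset.range i).image c := by
    intro i hi h
    obtain ⟨s, hs, hcs⟩ := Finset.mem_image.1 h
    have hs' := Finset.mem_range.1 hs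
    rcases hv s (by omega) with ⟨_, h2⟩ | ⟨h1, _, _⟩
    · -- v s = c s = v i
      exact absurd (hvinj s (by omega) i hi (by rw [h2, hcs])) (by omega)
    · -- c s ∉ A \ V_s, yet c s = v i ∈ A
      have hviA := (hvA i hi).1
      have hmem : c s ∈ (Finset.range s).image v := by
        by_contra hno
        exact h1 (Finset.mem_sdiff.2 ⟨hcs ▸ hviA, hno⟩)
      have : v i ∈ (Finset.range i).image v := by
        rw [← hcs]
        exact Finset.image_subset_image (Finset.range_subset_range.2 (by omega)) hmem
      exact (hvA i hi).2 this
  have hcardV : ∀ j ≤ k, ((Finset.range j).image v).card = j := by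
    intro j hj
    induction j with
    | zero => simp
    | succ n ih =>
      rw [Finset.range_add_one, Finset.image_insert,
        Finset.card_insert_of_notMem ((hvA n (by omega)).2), ih (by omega)]
  have hcardC : ∀ j ≤ m, ((Finset.range j).image c).card = j := by
    intro j hj
    induction j with
    | zero => simp
    | succ n ih =>
      rw [Finset.range_add_one, Finset.image_insert,
        Finset.card_insert_of_notMem (hcnotin n (by omega)), ih (by omega)]
  -- pointwise distance comparison for projections
  have dpt : ∀ i < k, ∀ t < i, d (v i) (v t) ≤ d (v i) (c t) := by
    intro i hi t ht
    rcases hv t (by omega) with ⟨_, h2⟩ | ⟨h1, h2, h3⟩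
    · rw [h2]
    · have hviA : v i ∈ A \ (Finset.range t).image v :=
        Finset.mem_sdiff.2 ⟨(hvA i hi).1, fun hmem => (hvA i hi).2
          (Finset.image_subset_image (Finset.range_subset_range.2 (by omega)) hmem)⟩
      have hmin := h3 (v i) hviA
      have hne1 : v i ≠ v t := fun hEq => absurd (hvinj i hi t (by omega) hEq) (by omega)
      have hne2 : v i ≠ c t := fun hEq => h1 (hEq ▸ hviA)
      have hne3 : v t ≠ c t := fun hEq => h1 (hEq ▸ h2)
      have hb : d (v t) (c t) ≤ d (v i) (c t) := by
        rw [hsymm (v t) (c t) hne3, hsymm (v i) (c t) hne2]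
        exact hmin
      calc d (v i) (v t) ≤ max (d (v i) (c t)) (d (v t) (c t)) :=
            hultra _ _ _ hne1 hne2 hne3
        _ ≤ d (v i) (c t) := max_le le_rfl hb
  -- distR comparison
  have hdistle : ∀ i < k,
      distR d r ((Finset.range i).image v) (v i) ≤
        distR d r ((Finset.range i).image c) (v i) := by
    intro i hi
    have hcV : ((Finset.range i).image v).card = i := hcardV i (by omega)
    have hcC : ((Finset.range i).image c).card = i := hcardC i (by omega)
    rcases le_or_gt i r with h | h
    · rw [distR_of_card_le (by omega : ((Finset.range i).image v).card ≤ r),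
        distR_of_card_le (by omega : ((Finset.range i).image c).card ≤ r)]
    · rw [distR_eq_Psup (by omega : r ≤ ((Finset.range i).image v).card),
        distR_eq_Psup (by omega : r ≤ ((Finset.range i).image c).card), hcV, hcC]
      apply Psup_le d (v i) (by omega : i - r ≤ ((Finset.range i).image v).card)
      intro B hB hBcard
      classical
      set T := (Finset.range i).filter (fun t => v t ∈ B) with hT
      have hTsub : T ⊆ Finset.range i := Finset.filter_subset _ _
      have hvinjT : ∀ s ∈ T, ∀ t ∈ T, v s = v t → s = t := by
        intro s hs t ht
        exact hvinj s (by have := Finset.mem_range.1 (hTsub hs); omega)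
          t (by have := Finset.mem_range.1 (hTsub ht); omega)
      have hBT : B = T.image v := by
        ext y
        simp only [hT, Finset.mem_image, Finset.mem_filter]
        constructor
        · intro hy
          obtain ⟨t, ht, rfl⟩ := Finset.mem_image.1 (hB hy)
          exact ⟨t, ⟨ht, hy⟩, rfl⟩
        · rintro ⟨t, ⟨_, hvt⟩, rfl⟩
          exact hvt
      have hTcard : T.card = i - r := by
        rw [hBT, Finset.card_image_of_injOn hvinjT] at hBcard
        exact hBcard
      have hcinjT : ∀ s ∈ T, ∀ t ∈ T, c s = c t → s = t := by
        intro s hs t ht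
        exact hcinj s (by have := Finset.mem_range.1 (hTsub hs); omega)
          t (by have := Finset.mem_range.1 (hTsub ht); omega)
      calc ∑ y ∈ B, d (v i) y = ∑ t ∈ T, d (v i) (v t) := by
            rw [hBT, Finset.sum_image hvinjT]
        _ ≤ ∑ t ∈ T, d (v i) (c t) := Finset.sum_le_sum fun t ht =>
            dpt i hi t (Finset.mem_range.1 (hTsub ht))
        _ = ∑ y ∈ T.image c, d (v i) y := (Finset.sum_image hcinjT).symm
        _ ≤ Psup d (v i) (i - r) ((Finset.range i).image c) :=
            le_Psup d (v i) (Finset.image_subset_image hTsub)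
              (by rw [Finset.card_image_of_injOn hcinjT, hTcard])
  -- greedy increment comparison
  have hginc : ∀ i < k,
      w (v i) + distR d r ((Finset.range i).image c) (v i) ≤
        w (c i) + distR d r ((Finset.range i).image c) (c i) := by
    intro i hi
    have him : i < m := by omega
    have h1 := hgreedy i him (v i) (hAC (hvA i hi).1) (hvnotinC i hi)
    rw [perR_insert w d hsymm hultra r (hvnotinC i hi),
      perR_insert w d hsymm hultra r (hcnotin i him)] at h1
    linarith
  -- perimeters as sums of increments
  have hperV : ∀ j ≤ k, perR w d r ((Finset.range j).image v) =
      ∑ i ∈ Finset.range j, (w (v i) + distR d r ((Finset.range i).image v) (v i)) := by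
    intro j hj
    induction j with
    | zero => simp [perR, perList]
    | succ n ih =>
      rw [Finset.sum_range_succ, Finset.range_add_one, Finset.image_insert,
        perR_insert w d hsymm hultra r ((hvA n (by omega)).2), ih (by omega)]
      ring
  have hperC : ∀ j ≤ k, perR w d r ((Finset.range j).image c) =
      ∑ i ∈ Finset.range j, (w (c i) + distR d r ((Finset.range i).image c) (c i)) := by
    intro j hj
    induction j with
    | zero => simp [perR, perList]
    | succ n ih =>
      rw [Finset.sum_range_succ, Finset.range_add_one, Finset.image_insert,
        perR_insert w d hsymm hultra r (hcnotin n (by omega)), ih (by omega)]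
      ring
  -- termwise inequality and sum equality force termwise equality
  have hle : ∀ i ∈ Finset.range k,
      w (v i) + distR d r ((Finset.range i).image v) (v i) ≤
        w (c i) + distR d r ((Finset.range i).image c) (c i) := by
    intro i hi
    have hi' := Finset.mem_range.1 hi
    calc w (v i) + distR d r ((Finset.range i).image v) (v i)
        ≤ w (v i) + distR d r ((Finset.range i).image c) (v i) := by
          have := hdistle i hi'; linarith
      _ ≤ w (c i) + distR d r ((Finset.range i).image c) (c i) := hginc i hi'
  have hsum : ∑ i ∈ Finset.range k,
      (w (v i) + distR d r ((Finset.range i).image v) (v i)) =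
      ∑ i ∈ Finset.range k,
      (w (c i) + distR d r ((Finset.range i).image c) (c i)) := by
    rw [← hperV k le_rfl, ← hperC k le_rfl]
    exact heq
  have hpt := (Finset.sum_eq_sum_iff_of_le hle).1 hsum
  intro j hj
  rw [hperV j (by omega), hperC j (by omega)]
  exact Finset.sum_congr rfl fun i hi =>
    hpt i (Finset.mem_range.2 (by have := Finset.mem_range.1 hi; omega))
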